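/- arXiv:2604.12415 — 4 statements merged into one kernel-verified Lean document; each statement's English description precedes it below -/
import Mathlib

section
/- Let b = 3π/2 and q = 1/((1+b²) sinh 1), and let k be the Green's function k(t,s) = (1/sinh 1)·cosh(1−max(t,s))cosh(min(t,s)). Then for every t ∈ [0, 2/3], ∫₀^{2/3} k(t,s) sin(bs) ds = q sin(bt) sinh(1) + q b (cosh(1−t) + cosh(1/3) cosh(t)). -/
open Real Set intervalIntegral

private lemma derivA (b x : ℝ) :
    HasDerivAt (fun s => Real.sinh s * Real.sin (b * s) - b * Real.cosh s * Real.cos (b * s))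
      ((1 + b ^ 2) * (Real.cosh x * Real.sin (b * x))) x := by
  have h1 : HasDerivAt (fun s : ℝ => b * s) b x := by
    simpa using (hasDerivAt_id x).const_mul b
  have h : HasDerivAt (fun s => Real.sinh s * Real.sin (b * s)
      - b * (Real.cosh s * Real.cos (b * s))) _ x := ((Real.hasDerivAt_sinh x).mul h1.sin).sub
    (((Real.hasDerivAt_cosh x).mul h1.cos).const_mul b)
  convert h using 1
  · funext s; ring
  · ring

private lemma derivB (b x : ℝ) :
    HasDerivAt (fun s => -Real.sinh (1 - s) * Real.sin (b * s)
        - b * Real.cosh (1 - s) * Real.cos (b * s))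
      ((1 + b ^ 2) * (Real.cosh (1 - x) * Real.sin (b * x))) x := by
  have h1 : HasDerivAt (fun s : ℝ => b * s) b x := by
    simpa using (hasDerivAt_id x).const_mul b
  have h2 : HasDerivAt (fun s : ℝ => 1 - s) (-1) x := by
    simpa using (hasDerivAt_id x).const_sub 1
  have h : HasDerivAt (fun s => -Real.sinh (1 - s) * Real.sin (b * s)
      - b * (Real.cosh (1 - s) * Real.cos (b * s))) _ x := (((h2.sinh).neg.mul h1.sin)).sub ((h2.cosh.mul h1.cos).const_mul b)
  convert h using 1
  · funext s; ring
  · simp only [Pi.neg_apply]; ring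

theorem stmt_3 (b q : ℝ) (hb : b = 3 * π / 2) (hq : q = 1 / ((1 + b ^ 2) * Real.sinh 1))
    (k : ℝ → ℝ → ℝ)
    (hk : ∀ t s, k t s = (1 / Real.sinh 1) * Real.cosh (1 - max t s) * Real.cosh (min t s)) :
    ∀ t ∈ Icc (0:ℝ) (2 / 3),
      ∫ s in (0:ℝ)..(2 / 3), k t s * Real.sin (b * s) =
        q * Real.sin (b * t) * Real.sinh 1 +
          q * b * (Real.cosh (1 - t) + Real.cosh (1 / 3) * Real.cosh t) := by
  rintro t ⟨ht0, ht1⟩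
  have hb2 : (1 + b ^ 2) ≠ 0 := by positivity
  have hs1 : Real.sinh 1 ≠ 0 := by
    have : (0:ℝ) < Real.sinh 1 := by
      rw [Real.sinh_eq]
      have h1 : Real.exp (-1) < Real.exp 1 := Real.exp_lt_exp.mpr (by norm_num)
      linarith
    linarith
  -- antiderivatives
  have hA : ∀ x : ℝ, HasDerivAt
      (fun s => (Real.sinh s * Real.sin (b * s) - b * Real.cosh s * Real.cos (b * s)) / (1 + b ^ 2))
      (Real.cosh x * Real.sin (b * x)) x := by
    intro x
    have := (derivA b x).div_const (1 + b ^ 2)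
    rw [mul_div_cancel_left₀ _ hb2] at this
    exact this
  have hB : ∀ x : ℝ, HasDerivAt
      (fun s => (-Real.sinh (1 - s) * Real.sin (b * s)
          - b * Real.cosh (1 - s) * Real.cos (b * s)) / (1 + b ^ 2))
      (Real.cosh (1 - x) * Real.sin (b * x)) x := by
    intro x
    have := (derivB b x).div_const (1 + b ^ 2)
    rw [mul_div_cancel_left₀ _ hb2] at this
    exact this
  -- continuity
  have hcont : Continuous fun s => k t s * Real.sin (b * s) := by
    have : (fun s => k t s * Real.sin (b * s)) =
        fun s => (1 / Real.sinh 1) * Real.cosh (1 - max t s) * Real.cosh (min t s)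
          * Real.sin (b * s) := by
      funext s; rw [hk]
    rw [this]; fun_prop
  have hint1 : IntervalIntegrable (fun s => k t s * Real.sin (b * s)) MeasureTheory.volume 0 t :=
    hcont.intervalIntegrable _ _
  have hint2 : IntervalIntegrable (fun s => k t s * Real.sin (b * s)) MeasureTheory.volume t (2/3) :=
    hcont.intervalIntegrable _ _
  have hsplit := intervalIntegral.integral_add_adjacent_intervals hint1 hint2
  rw [← hsplit]
  -- first piece
  have e1 : (∫ s in (0:ℝ)..t, k t s * Real.sin (b * s)) =
      (1 / Real.sinh 1) * Real.cosh (1 - t) *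
        ∫ s in (0:ℝ)..t, Real.cosh s * Real.sin (b * s) := by
    rw [← intervalIntegral.integral_const_mul]
    apply intervalIntegral.integral_congr
    intro s hs
    rw [Set.uIcc_of_le ht0] at hs
    show k t s * Real.sin (b * s) = _
    rw [hk, max_eq_left hs.2, min_eq_right hs.2]
    ring
  have e2 : (∫ s in t..(2/3:ℝ), k t s * Real.sin (b * s)) =
      (1 / Real.sinh 1) * Real.cosh t *
        ∫ s in t..(2/3:ℝ), Real.cosh (1 - s) * Real.sin (b * s) := by
    rw [← intervalIntegral.integral_const_mul]
    apply intervalIntegral.integral_congr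
    intro s hs
    rw [Set.uIcc_of_le ht1] at hs
    show k t s * Real.sin (b * s) = _
    rw [hk, max_eq_right hs.1, min_eq_left hs.1]
    ring
  have i1 : (∫ s in (0:ℝ)..t, Real.cosh s * Real.sin (b * s)) =
      (Real.sinh t * Real.sin (b * t) - b * Real.cosh t * Real.cos (b * t)) / (1 + b ^ 2)
      - (Real.sinh 0 * Real.sin (b * 0) - b * Real.cosh 0 * Real.cos (b * 0)) / (1 + b ^ 2) := by
    exact intervalIntegral.integral_eq_sub_of_hasDerivAt (fun x _ => hA x)
      ((by fun_prop : Continuous fun s => Real.cosh s * Real.sin (b * s)).intervalIntegrable _ _)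
  have i2 : (∫ s in t..(2/3:ℝ), Real.cosh (1 - s) * Real.sin (b * s)) =
      (-Real.sinh (1 - 2/3) * Real.sin (b * (2/3))
          - b * Real.cosh (1 - 2/3) * Real.cos (b * (2/3))) / (1 + b ^ 2)
      - (-Real.sinh (1 - t) * Real.sin (b * t)
          - b * Real.cosh (1 - t) * Real.cos (b * t)) / (1 + b ^ 2) := by
    exact intervalIntegral.integral_eq_sub_of_hasDerivAt (fun x _ => hB x)
      ((by fun_prop : Continuous fun s => Real.cosh (1 - s) * Real.sin (b * s)).intervalIntegrable _ _)
  have hb23 : b * (2/3) = π := by rw [hb]; ring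
  have hsinpi : Real.sin (b * (2/3)) = 0 := by rw [hb23, Real.sin_pi]
  have hcospi : Real.cos (b * (2/3)) = -1 := by rw [hb23, Real.cos_pi]
  have key : Real.sinh 1 = Real.sinh t * Real.cosh (1 - t) + Real.cosh t * Real.sinh (1 - t) := by
    rw [show (1:ℝ) = t + (1 - t) by ring, Real.sinh_add]
    ring_nf
  rw [e1, e2, i1, i2, hsinpi, hcospi, hq]
  simp only [mul_zero, Real.sinh_zero, Real.sin_zero, Real.cosh_zero, Real.cos_zero,
    show (1:ℝ) - 2/3 = 1/3 by norm_num]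
  field_simp
  rw [key]
  ring
end

section
/- Let b = 3π/2 and q = 1/((1+b²) sinh 1), and let k(t,s) = (1/sinh 1)·cosh(1−max(t,s))cosh(min(t,s)). Then for every t ∈ [2/3, 1], ∫_{2/3}^{1} k(t,s) sin(bs) ds = q (sinh(1) sin(bt) − b cosh(2/3) cosh(1−t)). -/
open Real Set intervalIntegral

theorem stmt_6 (b q : ℝ) (hb : b = 3 * π / 2) (hq : q = 1 / ((1 + b ^ 2) * Real.sinh 1))
    (k : ℝ → ℝ → ℝ)
    (hk : ∀ t s, k t s = (1 / Real.sinh 1) * Real.cosh (1 - max t s) * Real.cosh (min t s)) :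
    ∀ t ∈ Icc (2 / 3 : ℝ) 1,
      ∫ s in (2 / 3 : ℝ)..1, k t s * Real.sin (b * s) =
        q * (Real.sinh 1 * Real.sin (b * t) - b * Real.cosh (2 / 3) * Real.cosh (1 - t)) := by
  have hb2 : (1:ℝ) + b ^ 2 ≠ 0 := by positivity
  -- antiderivative of cosh s * sin (b s)
  have hF : ∀ s : ℝ, HasDerivAt
      (fun x => (Real.sinh x * Real.sin (b*x) - b * (Real.cosh x * Real.cos (b*x))) / (1 + b^2))
      (Real.cosh s * Real.sin (b*s)) s := by
    intro s
    have hbx : HasDerivAt (fun x => b * x) b s := by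
      simpa using (hasDerivAt_id s).const_mul b
    have hsin : HasDerivAt (fun x => Real.sin (b*x)) (Real.cos (b*s) * b) s :=
      (Real.hasDerivAt_sin (b*s)).comp s hbx
    have hcos : HasDerivAt (fun x => Real.cos (b*x)) (-Real.sin (b*s) * b) s :=
      (Real.hasDerivAt_cos (b*s)).comp s hbx
    have h := (((Real.hasDerivAt_sinh s).mul hsin).sub
      (((Real.hasDerivAt_cosh s).mul hcos).const_mul b)).div_const (1 + b^2)
    refine h.congr_deriv ?_
    field_simp
    ring
  -- antiderivative of cosh (1-s) * sin (b s)
  have hG : ∀ s : ℝ, HasDerivAt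
      (fun x => (-(Real.sinh (1-x) * Real.sin (b*x)) - b * (Real.cosh (1-x) * Real.cos (b*x))) / (1 + b^2))
      (Real.cosh (1-s) * Real.sin (b*s)) s := by
    intro s
    have hbx : HasDerivAt (fun x => b * x) b s := by
      simpa using (hasDerivAt_id s).const_mul b
    have hone : HasDerivAt (fun x : ℝ => 1 - x) (-1) s := by
      exact (hasDerivAt_id' s).const_sub 1
    have hsin : HasDerivAt (fun x => Real.sin (b*x)) (Real.cos (b*s) * b) s :=
      (Real.hasDerivAt_sin (b*s)).comp s hbx
    have hcos : HasDerivAt (fun x => Real.cos (b*x)) (-Real.sin (b*s) * b) s :=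
      (Real.hasDerivAt_cos (b*s)).comp s hbx
    have hsh : HasDerivAt (fun x => Real.sinh (1-x)) (Real.cosh (1-s) * (-1)) s :=
      (Real.hasDerivAt_sinh (1-s)).comp s hone
    have hch : HasDerivAt (fun x => Real.cosh (1-x)) (Real.sinh (1-s) * (-1)) s :=
      (Real.hasDerivAt_cosh (1-s)).comp s hone
    have h := ((((hsh.mul hsin).neg).sub ((hch.mul hcos).const_mul b)).div_const (1 + b^2))
    refine h.congr_deriv ?_
    field_simp
    ring
  have IA : ∀ x y : ℝ, ∫ s in x..y, Real.cosh s * Real.sin (b*s) =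
      (Real.sinh y * Real.sin (b*y) - b * (Real.cosh y * Real.cos (b*y))) / (1 + b^2)
      - (Real.sinh x * Real.sin (b*x) - b * (Real.cosh x * Real.cos (b*x))) / (1 + b^2) := by
    intro x y
    exact intervalIntegral.integral_eq_sub_of_hasDerivAt (fun s _ => hF s)
      ((Real.continuous_cosh.mul (Real.continuous_sin.comp
        (continuous_const.mul continuous_id))).intervalIntegrable x y)
  have IB : ∀ x y : ℝ, ∫ s in x..y, Real.cosh (1-s) * Real.sin (b*s) =
      (-(Real.sinh (1-y) * Real.sin (b*y)) - b * (Real.cosh (1-y) * Real.cos (b*y))) / (1 + b^2)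
      - (-(Real.sinh (1-x) * Real.sin (b*x)) - b * (Real.cosh (1-x) * Real.cos (b*x))) / (1 + b^2) := by
    intro x y
    exact intervalIntegral.integral_eq_sub_of_hasDerivAt (fun s _ => hG s)
      (((Real.continuous_cosh.comp (continuous_const.sub continuous_id)).mul
        (Real.continuous_sin.comp (continuous_const.mul continuous_id))).intervalIntegrable x y)
  intro t ht
  obtain ⟨ht1, ht2⟩ := ht
  have hc : Continuous (fun s => k t s * Real.sin (b*s)) := by
    simp only [hk]
    fun_prop
  rw [← intervalIntegral.integral_add_adjacent_intervals (a := (2/3:ℝ)) (b := t) (c := 1)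
    (hc.intervalIntegrable _ _) (hc.intervalIntegrable _ _)]
  have key1 : ∫ s in (2/3:ℝ)..t, k t s * Real.sin (b*s) =
      (1 / Real.sinh 1) * Real.cosh (1 - t) * ∫ s in (2/3:ℝ)..t, Real.cosh s * Real.sin (b*s) := by
    rw [← intervalIntegral.integral_const_mul]
    apply intervalIntegral.integral_congr
    intro s hs
    rw [uIcc_of_le ht1] at hs
    simp only [hk]; rw [max_eq_left hs.2, min_eq_right hs.2]
    ring
  have key2 : ∫ s in t..(1:ℝ), k t s * Real.sin (b*s) =
      (1 / Real.sinh 1) * Real.cosh t * ∫ s in t..(1:ℝ), Real.cosh (1-s) * Real.sin (b*s) := by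
    rw [← intervalIntegral.integral_const_mul]
    apply intervalIntegral.integral_congr
    intro s hs
    rw [uIcc_of_le ht2] at hs
    simp only [hk]; rw [max_eq_right hs.1, min_eq_left hs.1]
    ring
  rw [key1, key2, IA, IB]
  have e1 : b * (2/3) = π := by rw [hb]; ring
  have e2 : b * 1 = π + π/2 := by rw [hb]; ring
  rw [e1, e2, Real.sin_pi, Real.cos_pi, Real.sin_add, Real.cos_add, Real.sin_pi_div_two,
    Real.cos_pi_div_two]
  have hs1 : Real.sinh (1-t) * Real.cosh t + Real.cosh (1-t) * Real.sinh t = Real.sinh 1 := by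
    rw [← Real.sinh_add]; norm_num
  have hsn : Real.sinh 1 ≠ 0 := Real.sinh_ne_zero.mpr one_ne_zero
  rw [hq]
  field_simp
  rw [show t * b = b * t from mul_comm t b]
  simp only [sub_self, Real.sinh_zero, Real.cosh_zero, Real.sin_pi, Real.cos_pi]
  linear_combination Real.sin (b*t) * hs1
end

section
/- With b = 3π/2, q = 1/((1+b²) sinh 1), B(t) := −q b cosh(1/3) cosh(t) and D(t) := q(sinh(1) sin(bt) − b cosh(2/3) cosh(1−t)), one has B(x) < 0 for every x ∈ [0, 2/3] and D(y) < 0 for every y ∈ [2/3, 1]. -/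
open Real Set

theorem stmt_7 (b q : ℝ) (hb : b = 3 * π / 2) (hq : q = 1 / ((1 + b ^ 2) * Real.sinh 1))
    (B D : ℝ → ℝ)
    (hB : ∀ t, B t = -(q * b * Real.cosh (1 / 3) * Real.cosh t))
    (hD : ∀ t, D t = q * (Real.sinh 1 * Real.sin (b * t) - b * Real.cosh (2 / 3) * Real.cosh (1 - t))) :
    (∀ x ∈ Icc (0:ℝ) (2 / 3), B x < 0) ∧ (∀ y ∈ Icc (2 / 3 : ℝ) 1, D y < 0) := by
  have hbpos : 0 < b := by
    rw [hb]; positivity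
  have hqpos : 0 < q := by
    rw [hq]
    apply one_div_pos.mpr
    apply mul_pos (by positivity) (Real.sinh_pos_iff.mpr one_pos)
  have hsinh1 : Real.sinh 1 < b := by
    have h1 : Real.sinh 1 < 2 := by
      rw [Real.sinh_eq]
      have h := Real.exp_one_lt_d9
      have h2 : 0 < Real.exp (-1) := Real.exp_pos _
      nlinarith
    have : (3:ℝ) < π := Real.pi_gt_three
    linarith
  constructor
  · intro x _
    rw [hB]
    have h1 := Real.cosh_pos (x := x)
    have h2 := Real.cosh_pos (x := 1/3)
    have : 0 < q * b * Real.cosh (1/3) * Real.cosh x := by positivity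
    linarith
  · intro y _
    rw [hD]
    have h1 : Real.sin (b * y) ≤ 1 := Real.sin_le_one _
    have hs := Real.sinh_pos_iff.mpr (one_pos (α := ℝ))
    have hc1 : (1:ℝ) ≤ Real.cosh (2/3) := Real.one_le_cosh _
    have hc2 : (1:ℝ) ≤ Real.cosh (1 - y) := Real.one_le_cosh _
    have : Real.sinh 1 * Real.sin (b * y) < b * Real.cosh (2/3) * Real.cosh (1 - y) := by
      calc Real.sinh 1 * Real.sin (b * y) ≤ Real.sinh 1 * 1 := by nlinarith
        _ < b * Real.cosh (2/3) * Real.cosh (1 - y) := by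
            nlinarith [mul_le_mul hc1 hc2 zero_le_one (zero_le_one.trans hc1)]
    nlinarith
end

section
/- Let ρ > 0, ρ₀ := log √3, and define F_ρ on [0,1] piecewise by F_ρ(t) = e^{−2ρ} A(t) + e^{2ρ} B(t) for t ∈ [0, 2/3] and F_ρ(t) = e^{−2ρ} C(t) + e^{2ρ} D(t) for t ∈ [2/3, 1], with A, B, C, D as in Example 2.3. Then F_ρ attains a strictly positive value at some point of [0,1] if and only if ρ < ρ₀, and for ρ ∈ (0, ρ₀) the maximum of F_ρ over [0,1] equals (9 e^{−2ρ} − e^{2ρ})/(4π²), attained at t = 1. -/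
open Real Set

private lemma stmt17_aux1 (u v s c w : ℝ) (hu : 0 < u) (huv : u < v)
    (hs0 : 0 ≤ s) (hs1 : s ≤ 1) (hc : 1/2 ≤ c) (hw1 : 1 ≤ w) :
    u * (8 * s ^ 3 + 3 * w * c) - 3 * w * v * c ≤ 9 * u - v := by
  have h1 : (0:ℝ) ≤ u * (8 - 8 * s ^ 3) := by
    apply mul_nonneg hu.le
    nlinarith [sq_nonneg s, mul_nonneg hs0 hs0]
  have h2 : (0:ℝ) ≤ (v - u) * (3 * w * c - 1) := by
    apply mul_nonneg (by linarith)
    nlinarith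
  nlinarith [h1, h2]

private lemma stmt17_aux2 (u v s : ℝ) (hu : 0 < u) (hv : 0 < v)
    (hs0 : 0 ≤ s) (hs1 : s ≤ 1) (hs2 : 3/4 ≤ s ^ 2) :
    9 * u * s - v * s * (9 - 8 * s ^ 2) ≤ 9 * u - v := by
  nlinarith [mul_nonneg (sub_nonneg.2 hs1)
    (by nlinarith : (0:ℝ) ≤ 9 * u + v * (8 * s ^ 2 + 8 * s - 1))]

set_option maxHeartbeats 1000000 in
theorem stmt_17 (ρ ρ₀ : ℝ) (hρ : 0 < ρ) (hρ₀ : ρ₀ = Real.log (Real.sqrt 3))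
    (A B C D F : ℝ → ℝ)
    (hA : ∀ t, A t = (1 / (4 * π ^ 2)) * (8 * Real.sin (π * t / 2) ^ 3 + 3 * Real.sqrt 3 * Real.cos (π * t / 2)))
    (hB : ∀ t, B t = -((3 * Real.sqrt 3 / (4 * π ^ 2)) * Real.cos (π * t / 2)))
    (hC : ∀ t, C t = (9 / (4 * π ^ 2)) * Real.sin (π * t / 2))
    (hD : ∀ t, D t = -((1 / (4 * π ^ 2)) * Real.sin (π * t / 2) * (9 - 8 * Real.sin (π * t / 2) ^ 2)))
    (hF : ∀ t, F t = if t ≤ 2 / 3 then Real.exp (-2 * ρ) * A t + Real.exp (2 * ρ) * B t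
      else Real.exp (-2 * ρ) * C t + Real.exp (2 * ρ) * D t) :
    ((∃ t ∈ Icc (0:ℝ) 1, 0 < F t) ↔ ρ < ρ₀) ∧
      (ρ < ρ₀ →
        IsGreatest (F '' Icc (0:ℝ) 1) ((9 * Real.exp (-2 * ρ) - Real.exp (2 * ρ)) / (4 * π ^ 2)) ∧
        F 1 = (9 * Real.exp (-2 * ρ) - Real.exp (2 * ρ)) / (4 * π ^ 2)) := by
  have hπ : (0:ℝ) < π := Real.pi_pos
  have hπ2 : (0:ℝ) < 4 * π ^ 2 := by positivity
  set u := Real.exp (-2 * ρ) with hu_def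
  set v := Real.exp (2 * ρ) with hv_def
  clear_value u
  clear_value v
  have hu : 0 < u := hu_def ▸ Real.exp_pos _
  have hv : 0 < v := hv_def ▸ Real.exp_pos _
  have huv : u < v := by
    rw [hu_def, hv_def]; apply Real.exp_lt_exp.2; linarith
  have huv1 : u * v = 1 := by
    rw [hu_def, hv_def, ← Real.exp_add]; norm_num
  have hv1 : 1 < v := by
    rw [hv_def, show (1:ℝ) = Real.exp 0 by simp]
    exact Real.exp_lt_exp.2 (by linarith)
  -- value at 1
  have hsin1 : Real.sin (π * 1 / 2) = 1 := by
    rw [show π * 1 / 2 = π / 2 by ring, Real.sin_pi_div_two]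
  have hF1 : F 1 = (9 * u - v) / (4 * π ^ 2) := by
    rw [hF, if_neg (by norm_num), hC, hD, hsin1]
    field_simp
    ring
  -- the equivalence ρ < ρ₀ ↔ v < 3
  have hρ₀3 : ρ < ρ₀ ↔ v < 3 := by
    have h1 : ρ₀ = Real.log 3 / 2 := by rw [hρ₀, Real.log_sqrt (by norm_num)]
    have h2 : 2 * ρ < Real.log 3 ↔ v < 3 := by
      rw [hv_def, ← Real.exp_log (by norm_num : (0:ℝ) < 3), Real.exp_lt_exp,
        Real.log_exp]
    rw [h1, ← h2]
    constructor <;> intro hh <;> linarith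
  -- key bound : F t ≤ F 1 on Icc 0 1
  have key : ∀ t ∈ Icc (0:ℝ) 1, F t ≤ (9 * u - v) / (4 * π ^ 2) := by
    intro t ht
    obtain ⟨ht0, ht1⟩ := ht
    have hx0 : 0 ≤ π * t / 2 := by positivity
    have hxpi2 : π * t / 2 ≤ π / 2 := by nlinarith
    set s := Real.sin (π * t / 2) with hs_def
    set c := Real.cos (π * t / 2) with hc_def
    clear_value s
    clear_value c
    have hs0 : 0 ≤ s := by rw [hs_def]; exact Real.sin_nonneg_of_nonneg_of_le_pi hx0 (by linarith)
    have hs1 : s ≤ 1 := by rw [hs_def]; exact Real.sin_le_one _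
    have hc1 : c ≤ 1 := by rw [hc_def]; exact Real.cos_le_one _
    have hsc : s ^ 2 + c ^ 2 = 1 := by rw [hs_def, hc_def]; exact Real.sin_sq_add_cos_sq _
    have hw : Real.sqrt 3 ^ 2 = 3 := Real.sq_sqrt (by norm_num)
    have hw1 : 1 ≤ Real.sqrt 3 := by nlinarith [Real.sqrt_nonneg 3]
    rw [hF]
    split_ifs with h
    · -- t ≤ 2/3, so c ≥ 1/2
      have hc : 1/2 ≤ c := by
        rw [show (1/2 : ℝ) = Real.cos (π/3) by rw [Real.cos_pi_div_three], hc_def]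
        apply Real.cos_le_cos_of_nonneg_of_le_pi hx0 (by linarith)
        nlinarith
      rw [hA, hB, ← hs_def, ← hc_def]
      rw [show u * (1 / (4 * π ^ 2) * (8 * s ^ 3 + 3 * Real.sqrt 3 * c)) +
          v * -(3 * Real.sqrt 3 / (4 * π ^ 2) * c)
          = (u * (8 * s ^ 3 + 3 * Real.sqrt 3 * c) - 3 * Real.sqrt 3 * v * c) / (4 * π ^ 2) by
        rw [eq_div_iff (ne_of_gt hπ2)]; field_simp; ring]
      rw [div_le_div_iff_of_pos_right hπ2]
      exact stmt17_aux1 u v s c (Real.sqrt 3) hu huv hs0 hs1 hc hw1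
    · -- t > 2/3, so s² ≥ 3/4
      have hc : c ≤ 1/2 := by
        rw [show (1/2 : ℝ) = Real.cos (π/3) by rw [Real.cos_pi_div_three], hc_def]
        apply Real.cos_le_cos_of_nonneg_of_le_pi (by positivity) (by linarith)
        push_neg at h; nlinarith
      have hc0 : 0 ≤ c := by
        rw [hc_def]; exact Real.cos_nonneg_of_mem_Icc ⟨by linarith, hxpi2⟩
      have hs2 : 3/4 ≤ s ^ 2 := by nlinarith
      rw [hC, hD, ← hs_def]
      rw [show u * (9 / (4 * π ^ 2) * s) + v * -(1 / (4 * π ^ 2) * s * (9 - 8 * s ^ 2))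
          = (9 * u * s - v * s * (9 - 8 * s ^ 2)) / (4 * π ^ 2) by
        rw [eq_div_iff (ne_of_gt hπ2)]; field_simp; ring]
      rw [div_le_div_iff_of_pos_right hπ2]
      exact stmt17_aux2 u v s hu hv hs0 hs1 hs2
  have hpos : 0 < 9 * u - v ↔ v < 3 := by
    constructor
    · intro h; nlinarith
    · intro h; nlinarith
  have h1mem : (1:ℝ) ∈ Icc (0:ℝ) 1 := ⟨by norm_num, le_refl 1⟩
  constructor
  · constructor
    · rintro ⟨t, ht, hFt⟩
      have hkey := key t ht
      have hM : 0 < (9 * u - v) / (4 * π ^ 2) := lt_of_lt_of_le hFt hkey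
      rw [hρ₀3, ← hpos]
      have := (lt_div_iff₀ hπ2).1 hM
      linarith
    · intro h
      refine ⟨1, h1mem, ?_⟩
      rw [hF1]
      apply div_pos ?_ hπ2
      rw [hρ₀3] at h
      exact hpos.2 h
  · intro _
    refine ⟨⟨⟨1, h1mem, hF1⟩, ?_⟩, hF1⟩
    rintro y ⟨t, ht, rfl⟩
    exact key t ht
end
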